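/- Let N ≥ 1, let α ∈ {2,3}, and let a ∈ ℤ, b : {1,…,N} → ℤ satisfy a² − Σᵢ bᵢ² = −α, −3a + Σᵢ bᵢ = α − 2, and bᵢ ≥ 0 for all i. Let h, e₁, …, e_N be reduced area data, and assume a > 3 together with the area condition a·h − Σᵢ bᵢeᵢ < 3h − Σᵢ eᵢ. Then there is an index j and a set S of exactly 2a + α − 1 indices with j ∉ S such that b_j = a − 1, bᵢ = 1 for all i ∈ S, and bᵢ = 0 for all i ∉ S ∪ {j}; in particular 2a + α ≤ N, so a ≤ (N − α)/2. (This is Lemma 3.6 of the paper in its homological form: a symplectic (−α)-sphere A with ω(A) < −c₁(K)·[ω] must take the expression A = aH − (a−1)E_{j₁} − E_{j₂} − ⋯ − E_{j_{2a+α}}.) -/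

import Mathlib

open Finset

private lemma stmt3_int_key (a α S k : ℤ) (ha : 4 ≤ a) (hα1 : 2 ≤ α) (hα2 : α ≤ 3)
    (hk : 0 ≤ k)
    (hcs : S ^ 2 ≤ k * (a ^ 2 - 3 * a + 2 + S)) (h2k : 2 * k ≤ S)
    (h3 : 3 * a - 8 + k ≤ S) (h4 : S ≤ 3 * a + α - 2) : False := by
  have hk9 : k ≤ α + 6 := by omega
  nlinarith [sq_nonneg (S - 3 * k), sq_nonneg (S - 2 * k), mul_nonneg hk hk,
    sq_nonneg (a - 4), mul_le_mul_of_nonneg_left h4 hk]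

set_option maxHeartbeats 1600000

/-- Lemma 3.6 (homological form): let `A = aH − Σᵢ bᵢEᵢ` be the class of a symplectic
`(−α)`-sphere (`α = 2, 3`), with all `bᵢ ≥ 0` and `a > 3`, and suppose in reduced area
data `h, e₁, …, e_N` the area condition `ω(A) < −ω(K)` holds, i.e.
`a·h − Σᵢ bᵢeᵢ < 3h − Σᵢ eᵢ`. Then `A = aH − (a−1)E_{j} − Σ_{i ∈ S} Eᵢ` with
`|S| = 2a + α − 1`; in particular `2a + α ≤ N`. -/
theorem stmt3 (N : ℕ) (hN : 1 ≤ N) (α a : ℤ) (hα : α = 2 ∨ α = 3)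
    (b : Fin N → ℤ)
    (h1 : a ^ 2 - (∑ i, (b i) ^ 2) = -α)
    (h2 : -3 * a + (∑ i, b i) = α - 2)
    (hbpos : ∀ i, 0 ≤ b i)
    (h : ℝ) (e : Fin N → ℝ)
    (he : ∀ i, 0 < e i)
    (hmono : ∀ i j : Fin N, i ≤ j → e j ≤ e i)
    (h2pt : ∀ i j : Fin N, i ≠ j → 0 < h - e i - e j)
    (h3pt : ∀ i j k : Fin N, i ≠ j → i ≠ k → j ≠ k → 0 ≤ h - e i - e j - e k)
    (ha : 3 < a)
    (harea : (a : ℝ) * h - (∑ i, (b i : ℝ) * e i) < 3 * h - ∑ i, e i) :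
    (∃ (j : Fin N) (S : Finset (Fin N)), j ∉ S ∧ (S.card : ℤ) = 2 * a + α - 1 ∧
      b j = a - 1 ∧ (∀ i ∈ S, b i = 1) ∧ (∀ i, i ∉ S → i ≠ j → b i = 0)) ∧
    2 * a + α ≤ (N : ℤ) := by
  obtain ⟨hα1, hα2⟩ : 2 ≤ α ∧ α ≤ 3 := by rcases hα with h' | h' <;> omega
  have hs1 : (∑ i, b i) = 3 * a + α - 2 := by linarith
  have hs2 : (∑ i, (b i) ^ 2) = a ^ 2 + α := by linarith
  have hsq : ∀ i : Fin N, 0 ≤ (b i) ^ 2 - b i := by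
    intro i
    have h0 := hbpos i
    have h01 : b i = 0 ∨ 1 ≤ b i := by omega
    rcases h01 with h' | h'
    · simp [h']
    · nlinarith
  have hsum_sq_sub : ∑ i, ((b i) ^ 2 - b i) = a ^ 2 - 3 * a + 2 := by
    rw [Finset.sum_sub_distrib, hs1, hs2]; ring
  by_cases hM : ∃ j, a - 1 ≤ b j
  · obtain ⟨j, hj⟩ := hM
    have hle : (b j) ^ 2 - b j ≤ a ^ 2 - 3 * a + 2 := by
      rw [← hsum_sq_sub]
      exact Finset.single_le_sum (fun i _ => hsq i) (mem_univ j)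
    have hbj : b j = a - 1 := by
      by_contra hne
      have haj : a ≤ b j := by omega
      nlinarith [sq_nonneg (b j - a)]
    have he2 : ∑ i ∈ univ.erase j, ((b i) ^ 2 - b i) = 0 := by
      rw [Finset.sum_erase_eq_sub (mem_univ j), hsum_sq_sub, hbj]; ring
    have hall : ∀ i ∈ univ.erase j, (b i) ^ 2 - b i = 0 :=
      (Finset.sum_eq_zero_iff_of_nonneg (fun i _ => hsq i)).mp he2
    have h01 : ∀ i : Fin N, i ≠ j → b i = 0 ∨ b i = 1 := by
      intro i hi
      have hz := hall i (Finset.mem_erase.mpr ⟨hi, mem_univ i⟩)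
      have hm : b i * (b i - 1) = 0 := by linear_combination hz
      rcases mul_eq_zero.mp hm with h' | h'
      · exact Or.inl h'
      · exact Or.inr (by omega)
    set S : Finset (Fin N) := (univ.erase j).filter (fun i => b i = 1) with hSdef
    have hjS : j ∉ S := by simp [hSdef]
    have hSone : ∀ i ∈ S, b i = 1 := by
      intro i hi
      exact (Finset.mem_filter.mp hi).2
    have hSzero : ∀ i, i ∉ S → i ≠ j → b i = 0 := by
      intro i hiS hij
      rcases h01 i hij with h' | h'
      · exact h'
      · exact absurd (Finset.mem_filter.mpr ⟨Finset.mem_erase.mpr ⟨hij, mem_univ i⟩, h'⟩) hiS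
    have he1 : ∑ i ∈ univ.erase j, b i = 2 * a + α - 1 := by
      rw [Finset.sum_erase_eq_sub (mem_univ j), hs1, hbj]; ring
    have hsplit := Finset.sum_filter_add_sum_filter_not (univ.erase j) (fun i => b i = 1) b
    have hzero : ∑ i ∈ (univ.erase j).filter (fun i => ¬ b i = 1), b i = 0 := by
      apply Finset.sum_eq_zero
      intro i hi
      obtain ⟨hi1, hi2⟩ := Finset.mem_filter.mp hi
      rcases h01 i (Finset.mem_erase.mp hi1).1 with h' | h'
      · exact h'
      · exact absurd h' hi2
    have hSsum : ∑ i ∈ S, b i = (S.card : ℤ) := by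
      rw [Finset.sum_congr rfl hSone]
      simp
    have hcard : (S.card : ℤ) = 2 * a + α - 1 := by
      rw [← hSdef] at hsplit
      rw [hzero, add_zero, hSsum] at hsplit
      exact hsplit.trans he1
    have hNcard : S.card + 1 ≤ N := by
      have hc := Finset.card_le_card (show S ⊆ univ.erase j from Finset.filter_subset _ _)
      rw [Finset.card_erase_of_mem (mem_univ j), Finset.card_univ, Fintype.card_fin] at hc
      omega
    have hNZ : (S.card : ℤ) + 1 ≤ (N : ℤ) := by exact_mod_cast hNcard
    exact ⟨⟨j, S, hjS, hcard, hbj, hSone, hSzero⟩, by omega⟩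
  · exfalso
    push_neg at hM
    have hub : ∀ i, b i ≤ a - 2 := fun i => by have := hM i; omega
    -- N ≥ 3
    have hsum_ub : (3 * a + α - 2 : ℤ) ≤ (N : ℤ) * (a - 2) := by
      rw [← hs1]
      calc ∑ i, b i ≤ ∑ _i : Fin N, (a - 2) := Finset.sum_le_sum (fun i _ => hub i)
        _ = (N : ℤ) * (a - 2) := by simp [Finset.sum_const, Finset.card_univ, mul_comm]; ring
    have hN3 : 3 ≤ N := by
      by_contra h'
      push_neg at h'
      have hN2 : (N : ℤ) ≤ 2 := by exact_mod_cast Nat.lt_succ_iff.mp h'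
      nlinarith
    set i0 : Fin N := ⟨0, by omega⟩ with hi0def
    set i1 : Fin N := ⟨1, by omega⟩ with hi1def
    set i2 : Fin N := ⟨2, by omega⟩ with hi2def
    have hne01 : i0 ≠ i1 := by simp [hi0def, hi1def, Fin.ext_iff]
    have hne02 : i0 ≠ i2 := by simp [hi0def, hi2def, Fin.ext_iff]
    have hne12 : i1 ≠ i2 := by simp [hi1def, hi2def, Fin.ext_iff]
    have htr : e i0 + e i1 + e i2 ≤ h := by
      have := h3pt i0 i1 i2 hne01 hne02 hne12
      linarith
    set T : Finset (Fin N) := univ.filter (fun i => 2 ≤ b i) with hTdef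
    have hcs : (∑ i ∈ T, b i) ^ 2 ≤ (T.card : ℤ) * ∑ i ∈ T, (b i) ^ 2 := by
      exact_mod_cast sq_sum_le_card_mul_sum_sq (s := T) (f := b)
    have hTsq : ∑ i ∈ T, (b i) ^ 2 ≤ a ^ 2 - 3 * a + 2 + (∑ i ∈ T, b i) := by
      have hsub : ∑ i ∈ T, ((b i) ^ 2 - b i) ≤ a ^ 2 - 3 * a + 2 := by
        rw [← hsum_sq_sub]
        exact Finset.sum_le_sum_of_subset_of_nonneg (Finset.subset_univ T)
          (fun i _ _ => hsq i)
      have := Finset.sum_sub_distrib (s := T) (f := fun i => (b i) ^ 2) (g := b)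
      omega
    have h2k : 2 * (T.card : ℤ) ≤ (∑ i ∈ T, b i) := by
      have : ∑ _i ∈ T, (2 : ℤ) ≤ ∑ i ∈ T, b i := by
        apply Finset.sum_le_sum
        intro i hi
        exact (Finset.mem_filter.mp hi).2
      simpa [Finset.sum_const, mul_comm] using this
    have hStot : (∑ i ∈ T, b i) ≤ 3 * a + α - 2 := by
      rw [← hs1]
      exact Finset.sum_le_sum_of_subset_of_nonneg (Finset.subset_univ T)
        (fun i _ _ => hbpos i)
    have hSk : ∑ i ∈ T, (b i - 1) = (∑ i ∈ T, b i) - (T.card : ℤ) := by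
      rw [Finset.sum_sub_distrib]
      simp
    have hW : ∑ i ∈ T, (b i - 1) ≤ 3 * a - 9 := by
      by_contra h'
      push_neg at h'
      have h3 : 3 * a - 8 + (T.card : ℤ) ≤ (∑ i ∈ T, b i) := by omega
      have hcs2 : (∑ i ∈ T, b i) ^ 2 ≤ (T.card : ℤ) * (a ^ 2 - 3 * a + 2 + (∑ i ∈ T, b i)) :=
        le_trans hcs (mul_le_mul_of_nonneg_left hTsq (by positivity))
      exact stmt3_int_key a α (∑ i ∈ T, b i) (T.card : ℤ) (by omega) hα1 hα2
        (by positivity) hcs2 h2k h3 hStot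
    -- analytic part
    have harea' : ((a : ℝ) - 3) * h < ∑ i, ((b i : ℝ) - 1) * e i := by
      have hsplit : ∑ i, ((b i : ℝ) - 1) * e i
          = (∑ i, (b i : ℝ) * e i) - ∑ i, e i := by
        rw [← Finset.sum_sub_distrib]
        exact Finset.sum_congr rfl (fun i _ => by ring)
      rw [hsplit]
      linarith
    have hstep1 : ∑ i, ((b i : ℝ) - 1) * e i ≤ ∑ i ∈ T, ((b i : ℝ) - 1) * e i := by
      have hsp := Finset.sum_filter_add_sum_filter_not univ (fun i => 2 ≤ b i)
        (fun i => ((b i : ℝ) - 1) * e i)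
      have hnonpos : ∑ i ∈ univ.filter (fun i => ¬ 2 ≤ b i), ((b i : ℝ) - 1) * e i ≤ 0 := by
        apply Finset.sum_nonpos
        intro i hi
        have hb1 : b i ≤ 1 := by
          have := (Finset.mem_filter.mp hi).2
          omega
        have hbr : (b i : ℝ) - 1 ≤ 0 := by
          have : (b i : ℝ) ≤ 1 := by exact_mod_cast hb1
          linarith
        exact mul_nonpos_of_nonpos_of_nonneg hbr (le_of_lt (he i))
      rw [← hTdef] at hsp
      linarith
    have hdec : ∑ i ∈ T, ((b i : ℝ) - 1) * e i
        = ∑ i ∈ T, ((b i : ℝ) - 1) * (e i - e i2)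
          + (∑ i ∈ T, ((b i : ℝ) - 1)) * e i2 := by
      rw [Finset.sum_mul, ← Finset.sum_add_distrib]
      exact Finset.sum_congr rfl (fun i _ => by ring)
    set P : Finset (Fin N) := {i0, i1, i2} with hPdef
    have hg1 : ∑ i ∈ T, ((b i : ℝ) - 1) * (e i - e i2)
        ≤ ∑ i ∈ T ∩ P, ((b i : ℝ) - 1) * (e i - e i2) := by
      have hsum := Finset.sum_inter_add_sum_sdiff T P
        (fun i => ((b i : ℝ) - 1) * (e i - e i2))
      have hd : ∑ i ∈ T \ P, ((b i : ℝ) - 1) * (e i - e i2) ≤ 0 := by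
        apply Finset.sum_nonpos
        intro i hi
        obtain ⟨hiT, hiP⟩ := Finset.mem_sdiff.mp hi
        have hb2 : 2 ≤ b i := (Finset.mem_filter.mp hiT).2
        have hbr : (0 : ℝ) ≤ (b i : ℝ) - 1 := by
          have : (2 : ℝ) ≤ (b i : ℝ) := by exact_mod_cast hb2
          linarith
        have hei : e i ≤ e i2 := by
          apply hmono
          simp only [hPdef, Finset.mem_insert, Finset.mem_singleton] at hiP
          push_neg at hiP
          obtain ⟨hp0, hp1, hp2⟩ := hiP
          rw [Fin.le_def]
          have hv0 : i.val ≠ 0 := fun hv => hp0 (Fin.ext hv)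
          have hv1 : i.val ≠ 1 := fun hv => hp1 (Fin.ext hv)
          have hv2 : i.val ≠ 2 := fun hv => hp2 (Fin.ext hv)
          simp only [hi2def]
          omega
        exact mul_nonpos_of_nonneg_of_nonpos hbr (by linarith)
      linarith
    have hg2 : ∑ i ∈ T ∩ P, ((b i : ℝ) - 1) * (e i - e i2)
        ≤ ∑ i ∈ T ∩ P, ((a : ℝ) - 3) * (e i - e i2) := by
      apply Finset.sum_le_sum
      intro i hi
      obtain ⟨hiT, hiP⟩ := Finset.mem_inter.mp hi
      have hei : e i2 ≤ e i := by
        apply hmono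
        simp only [hPdef, Finset.mem_insert, Finset.mem_singleton] at hiP
        rw [Fin.le_def]
        rcases hiP with h' | h' | h' <;> simp [h', hi0def, hi1def, hi2def]
      have hbr : (b i : ℝ) - 1 ≤ (a : ℝ) - 3 := by
        have : (b i : ℝ) ≤ (a : ℝ) - 2 := by exact_mod_cast hub i
        linarith
      exact mul_le_mul_of_nonneg_right hbr (by linarith)
    have hg3 : ∑ i ∈ T ∩ P, ((a : ℝ) - 3) * (e i - e i2)
        ≤ ∑ i ∈ P, ((a : ℝ) - 3) * (e i - e i2) := by
      apply Finset.sum_le_sum_of_subset_of_nonneg (Finset.inter_subset_right)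
      intro i hiP _
      have hei : e i2 ≤ e i := by
        apply hmono
        simp only [hPdef, Finset.mem_insert, Finset.mem_singleton] at hiP
        rw [Fin.le_def]
        rcases hiP with h' | h' | h' <;> simp [h', hi0def, hi1def, hi2def]
      have har : (0 : ℝ) ≤ (a : ℝ) - 3 := by
        have : (3 : ℝ) < (a : ℝ) := by exact_mod_cast ha
        linarith
      exact mul_nonneg har (by linarith)
    have hg4 : ∑ i ∈ P, ((a : ℝ) - 3) * (e i - e i2)
        = ((a : ℝ) - 3) * (e i0 + e i1 + e i2) - 3 * ((a : ℝ) - 3) * e i2 := by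
      rw [hPdef]
      rw [Finset.sum_insert (by simp [hne01, hne02]),
        Finset.sum_insert (by simp [hne12]), Finset.sum_singleton]
      ring
    have hWr : (∑ i ∈ T, ((b i : ℝ) - 1)) = ((∑ i ∈ T, (b i - 1) : ℤ) : ℝ) := by
      push_cast
      rfl
    have hWle : (∑ i ∈ T, ((b i : ℝ) - 1)) ≤ 3 * (a : ℝ) - 9 := by
      rw [hWr]
      exact_mod_cast hW
    have har : (0 : ℝ) ≤ (a : ℝ) - 3 := by
      have : (3 : ℝ) < (a : ℝ) := by exact_mod_cast ha
      linarith
    have hfinal : ∑ i ∈ T, ((b i : ℝ) - 1) * e i ≤ ((a : ℝ) - 3) * h := by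
      rw [hdec]
      have hWe : (∑ i ∈ T, ((b i : ℝ) - 1)) * e i2 ≤ (3 * (a : ℝ) - 9) * e i2 :=
        mul_le_mul_of_nonneg_right hWle (le_of_lt (he i2))
      have htrh : ((a : ℝ) - 3) * (e i0 + e i1 + e i2) ≤ ((a : ℝ) - 3) * h :=
        mul_le_mul_of_nonneg_left htr har
      nlinarith [hg1, hg2, hg3, hg4]
    linarith
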